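/- Stationary distribution of the exploration chain (part of Theorem 4): with P_ε as defined on the up-closed family 𝒞̄, P_ε is a stochastic matrix on 𝒞̄ (nonnegative entries with each row summing to 1), and the probability distribution μ_ε on 𝒞̄ given by μ_ε(C) = ε^{|C|} / K_ε, where K_ε = Σ_{D ∈ 𝒞̄} ε^{|D|}, satisfies the detailed balance condition μ_ε(A) P_ε(A,B) = μ_ε(B) P_ε(B,A) for all A, B ∈ 𝒞̄; in particular Σ_{A ∈ 𝒞̄} μ_ε(A) P_ε(A,B) = μ_ε(B) for all B ∈ 𝒞̄, i.e., μ_ε is an invariant (stationary) distribution of the chain. -/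

import Mathlib

/-- Number of admissible configurations reachable from `A` by removing one node. -/
def ncAdm {α : Type*} [DecidableEq α] (F : Finset (Finset α)) (A : Finset α) : ℕ :=
  (A.filter (fun r => A.erase r ∈ F)).card

/-- Transition probabilities of the exploration Markov chain on the family `F`
of admissible control sets. -/
noncomputable def Pstep {α : Type*} [DecidableEq α] [Fintype α]
    (F : Finset (Finset α)) (ε : ℝ) (A B : Finset α) : ℝ :=
  if B ∈ F ∧ B ⊂ A ∧ B.card + 1 = A.card then 1 / (Fintype.card α : ℝ)
  else if A ⊂ B ∧ B.card = A.card + 1 then ε / (Fintype.card α : ℝ)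
  else if B = A then
    1 - (ε * ((Fintype.card α : ℝ) - (A.card : ℝ)) + (ncAdm F A : ℝ)) /
      (Fintype.card α : ℝ)
  else 0

lemma ncAdm_le {α : Type*} [DecidableEq α] (F : Finset (Finset α)) (A : Finset α) :
    ncAdm F A ≤ A.card :=
  Finset.card_le_card (Finset.filter_subset _ _)

lemma rowSum {α : Type*} [DecidableEq α] [Fintype α]
    (hcard : 1 ≤ Fintype.card α)
    (F : Finset (Finset α))
    (hup : ∀ A ∈ F, ∀ B : Finset α, A ⊆ B → B ∈ F)
    (ε : ℝ) (A : Finset α) (hA : A ∈ F) :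
    ∑ B ∈ F, Pstep F ε A B = 1 := by
  classical
  have hn0 : (0:ℝ) < (Fintype.card α : ℝ) := by exact_mod_cast hcard
  set p₁ : Finset α → Prop := fun B => B ⊂ A ∧ B.card + 1 = A.card with hp₁
  set p₂ : Finset α → Prop := fun B => A ⊂ B ∧ B.card = A.card + 1 with hp₂
  rw [← Finset.sum_filter_add_sum_filter_not F p₁,
      ← Finset.sum_filter_add_sum_filter_not (F.filter (fun B => ¬ p₁ B)) p₂]
  have h1 : ∑ B ∈ F.filter p₁, Pstep F ε A B
      = (F.filter p₁).card * (1 / (Fintype.card α : ℝ)) := by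
    rw [Finset.sum_congr rfl (fun B hB => ?_), Finset.sum_const, nsmul_eq_mul]
    rw [Finset.mem_filter] at hB
    simp only [Pstep]
    rw [if_pos (show B ∈ F ∧ B ⊂ A ∧ B.card + 1 = A.card from ⟨hB.1, hB.2⟩)]
  have h2 : ∑ B ∈ (F.filter (fun B => ¬ p₁ B)).filter p₂, Pstep F ε A B
      = ((F.filter (fun B => ¬ p₁ B)).filter p₂).card * (ε / (Fintype.card α : ℝ)) := by
    rw [Finset.sum_congr rfl (fun B hB => ?_), Finset.sum_const, nsmul_eq_mul]
    rw [Finset.mem_filter, Finset.mem_filter] at hB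
    have hnot : ¬ (B ∈ F ∧ B ⊂ A ∧ B.card + 1 = A.card) := fun h => hB.1.2 ⟨h.2.1, h.2.2⟩
    simp only [Pstep, if_neg hnot, if_pos (show A ⊂ B ∧ B.card = A.card + 1 from hB.2)]
  have h3 : ∑ B ∈ (F.filter (fun B => ¬ p₁ B)).filter (fun B => ¬ p₂ B), Pstep F ε A B
      = 1 - (ε * ((Fintype.card α : ℝ) - (A.card : ℝ)) + (ncAdm F A : ℝ)) /
      (Fintype.card α : ℝ) := by
    have hAmem : A ∈ (F.filter (fun B => ¬ p₁ B)).filter (fun B => ¬ p₂ B) := by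
      simp only [Finset.mem_filter, hp₁, hp₂]
      exact ⟨⟨hA, fun h => (ssubset_irrefl A) h.1⟩, fun h => (ssubset_irrefl A) h.1⟩
    rw [Finset.sum_eq_single_of_mem A hAmem (fun B hB hne => ?_)]
    · have hna : ¬ (A ∈ F ∧ A ⊂ A ∧ A.card + 1 = A.card) := fun h => (ssubset_irrefl A) h.2.1
      have hnb : ¬ (A ⊂ A ∧ A.card = A.card + 1) := fun h => (ssubset_irrefl A) h.1
      simp only [Pstep]
      rw [if_neg hna, if_neg hnb, if_true]
    · rw [Finset.mem_filter, Finset.mem_filter] at hB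
      simp only [Pstep]
      rw [if_neg (fun h => hB.1.2 ⟨h.2.1, h.2.2⟩), if_neg hB.2, if_neg hne]
  -- counting the down-moves
  have hD : (F.filter p₁).card = ncAdm F A := by
    symm
    apply Finset.card_bij (fun r _ => A.erase r)
    · intro r hr
      rw [Finset.mem_filter] at hr
      rw [Finset.mem_filter]
      exact ⟨hr.2, Finset.erase_ssubset hr.1, Finset.card_erase_add_one hr.1⟩
    · intro r hr s hs h
      rw [Finset.mem_filter] at hr hs
      exact Finset.erase_injOn A hr.1 hs.1 h
    · intro B hB
      rw [Finset.mem_filter] at hB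
      obtain ⟨hBF, hBA, hcardB⟩ := hB
      have hsd : (A \ B).card = 1 := by
        rw [Finset.card_sdiff_of_subset hBA.subset]; omega
      obtain ⟨r, hr⟩ := Finset.card_eq_one.mp hsd
      have hrA : r ∈ A := by
        have : r ∈ A \ B := hr ▸ Finset.mem_singleton_self r
        exact (Finset.mem_sdiff.mp this).1
      have hBeq : A.erase r = B := by
        rw [Finset.erase_eq, ← hr, Finset.sdiff_sdiff_self_left,
            Finset.inter_eq_right.mpr hBA.subset]
      refine ⟨r, ?_, hBeq⟩
      rw [Finset.mem_filter]
      exact ⟨hrA, hBeq ▸ hBF⟩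
  -- counting the up-moves
  have hU : ((F.filter (fun B => ¬ p₁ B)).filter p₂).card = Fintype.card α - A.card := by
    rw [← Finset.card_compl A]
    symm
    apply Finset.card_bij (fun x _ => insert x A)
    · intro x hx
      have hxA : x ∉ A := Finset.mem_compl.mp hx
      rw [Finset.mem_filter, Finset.mem_filter]
      have h2 : A ⊂ insert x A := Finset.ssubset_insert hxA
      have h3 : (insert x A).card = A.card + 1 := Finset.card_insert_of_notMem hxA
      refine ⟨⟨hup A hA _ (Finset.subset_insert x A), fun h => ?_⟩, h2, h3⟩
      exact absurd h.1 (by intro hc; exact (ssubset_asymm h2 hc))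
    · intro x hx y hy h
      have hxA : x ∉ A := Finset.mem_compl.mp hx
      have hyA : y ∉ A := Finset.mem_compl.mp hy
      have : x ∈ insert y A := h ▸ Finset.mem_insert_self x A
      rcases Finset.mem_insert.mp this with h' | h'
      · exact h'
      · exact absurd h' hxA
    · intro B hB
      rw [Finset.mem_filter, Finset.mem_filter] at hB
      obtain ⟨⟨hBF, _⟩, hAB, hcardB⟩ := hB
      have hsd : (B \ A).card = 1 := by
        rw [Finset.card_sdiff_of_subset hAB.subset]; omega
      obtain ⟨x, hx⟩ := Finset.card_eq_one.mp hsd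
      have hxB : x ∈ B ∧ x ∉ A := by
        have : x ∈ B \ A := hx ▸ Finset.mem_singleton_self x
        exact ⟨(Finset.mem_sdiff.mp this).1, (Finset.mem_sdiff.mp this).2⟩
      refine ⟨x, Finset.mem_compl.mpr hxB.2, ?_⟩
      apply Finset.eq_of_subset_of_card_le
      · exact Finset.insert_subset hxB.1 hAB.subset
      · rw [Finset.card_insert_of_notMem hxB.2]; omega
  rw [h1, h2, h3, hD, hU]
  have hle : A.card ≤ Fintype.card α := Finset.card_le_univ A
  rw [Nat.cast_sub hle]
  field_simp
  ring

lemma Pstep_nonneg {α : Type*} [DecidableEq α] [Fintype α]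
    (hcard : 1 ≤ Fintype.card α) (F : Finset (Finset α))
    (ε : ℝ) (hε0 : 0 < ε) (hε1 : ε ≤ 1) (A B : Finset α) :
    0 ≤ Pstep F ε A B := by
  have hn0 : (0:ℝ) < (Fintype.card α : ℝ) := by exact_mod_cast hcard
  have ha : (A.card : ℝ) ≤ (Fintype.card α : ℝ) := by
    exact_mod_cast Finset.card_le_univ A
  have hnc : (ncAdm F A : ℝ) ≤ (A.card : ℝ) := by exact_mod_cast ncAdm_le F A
  unfold Pstep
  split_ifs with h1 h2 h3
  · positivity
  · positivity
  · have : (ε * ((Fintype.card α : ℝ) - (A.card : ℝ)) + (ncAdm F A : ℝ)) /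
        (Fintype.card α : ℝ) ≤ 1 := by
      rw [div_le_one hn0]
      nlinarith
    linarith
  · exact le_refl 0

lemma Pstep_db {α : Type*} [DecidableEq α] [Fintype α]
    (F : Finset (Finset α)) (ε : ℝ)
    (A : Finset α) (hA : A ∈ F) (B : Finset α) (hB : B ∈ F) (K : ℝ) :
    (ε ^ A.card / K) * Pstep F ε A B = (ε ^ B.card / K) * Pstep F ε B A := by
  by_cases hBA : B ⊂ A ∧ B.card + 1 = A.card
  · have h1 : Pstep F ε A B = 1 / (Fintype.card α : ℝ) := by
      simp only [Pstep]
      rw [if_pos (show B ∈ F ∧ B ⊂ A ∧ B.card + 1 = A.card from ⟨hB, hBA⟩)]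
    have h2 : Pstep F ε B A = ε / (Fintype.card α : ℝ) := by
      have hna : ¬ (A ∈ F ∧ A ⊂ B ∧ A.card + 1 = B.card) :=
        fun h => ssubset_asymm hBA.1 h.2.1
      simp only [Pstep]
      rw [if_neg hna, if_pos (show B ⊂ A ∧ A.card = B.card + 1 from ⟨hBA.1, hBA.2.symm⟩)]
    rw [h1, h2, ← hBA.2, pow_succ]
    ring
  · by_cases hAB : A ⊂ B ∧ B.card = A.card + 1
    · have h1 : Pstep F ε A B = ε / (Fintype.card α : ℝ) := by
        have hna : ¬ (B ∈ F ∧ B ⊂ A ∧ B.card + 1 = A.card) :=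
          fun h => ssubset_asymm hAB.1 h.2.1
        simp only [Pstep]
        rw [if_neg hna, if_pos hAB]
      have h2 : Pstep F ε B A = 1 / (Fintype.card α : ℝ) := by
        simp only [Pstep]
        rw [if_pos (show A ∈ F ∧ A ⊂ B ∧ A.card + 1 = B.card from ⟨hA, hAB.1, hAB.2.symm⟩)]
      rw [h1, h2, hAB.2, pow_succ]
      ring
    · by_cases hE : B = A
      · subst hE; rfl
      · have h1 : Pstep F ε A B = 0 := by
          simp only [Pstep]
          rw [if_neg (fun h => hBA ⟨h.2.1, h.2.2⟩), if_neg hAB, if_neg hE]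
        have h2 : Pstep F ε B A = 0 := by
          simp only [Pstep]
          rw [if_neg (show ¬ (A ∈ F ∧ A ⊂ B ∧ A.card + 1 = B.card) from
                fun h => hAB ⟨h.2.1, h.2.2.symm⟩),
              if_neg (show ¬ (B ⊂ A ∧ A.card = B.card + 1) from
                fun h => hBA ⟨h.1, h.2.symm⟩),
              if_neg (fun h : A = B => hE h.symm)]
        rw [h1, h2, mul_zero, mul_zero]

/-- Theorem 4 part, stationary distribution of the exploration chain. -/
theorem exploration_chain_stationary
    {α : Type*} [DecidableEq α] [Fintype α] (hcard : 1 ≤ Fintype.card α)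
    (F : Finset (Finset α)) (hne : F.Nonempty)
    (hup : ∀ A ∈ F, ∀ B : Finset α, A ⊆ B → B ∈ F)
    (ε : ℝ) (hε : 0 < ε ∧ ε ≤ 1) :
    (∀ A ∈ F, ∀ B ∈ F, 0 ≤ Pstep F ε A B) ∧
    (∀ A ∈ F, ∑ B ∈ F, Pstep F ε A B = 1) ∧
    (∀ A ∈ F, ∀ B ∈ F,
      (ε ^ A.card / ∑ D ∈ F, ε ^ D.card) * Pstep F ε A B =
        (ε ^ B.card / ∑ D ∈ F, ε ^ D.card) * Pstep F ε B A) ∧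
    (∀ B ∈ F,
      ∑ A ∈ F, (ε ^ A.card / ∑ D ∈ F, ε ^ D.card) * Pstep F ε A B =
        ε ^ B.card / ∑ D ∈ F, ε ^ D.card) := by
  obtain ⟨hε0, hε1⟩ := hε
  refine ⟨fun A _ B _ => Pstep_nonneg hcard F ε hε0 hε1 A B,
    fun A hA => rowSum hcard F hup ε A hA,
    fun A hA B hB => Pstep_db F ε A hA B hB _,
    fun B hB => ?_⟩
  calc ∑ A ∈ F, (ε ^ A.card / ∑ D ∈ F, ε ^ D.card) * Pstep F ε A B
      = ∑ A ∈ F, (ε ^ B.card / ∑ D ∈ F, ε ^ D.card) * Pstep F ε B A :=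
        Finset.sum_congr rfl (fun A hA => Pstep_db F ε A hA B hB _)
    _ = (ε ^ B.card / ∑ D ∈ F, ε ^ D.card) * ∑ A ∈ F, Pstep F ε B A := by
        rw [Finset.mul_sum]
    _ = ε ^ B.card / ∑ D ∈ F, ε ^ D.card := by
        rw [rowSum hcard F hup ε B hB, mul_one]
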